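/- In any algebra satisfying (B1)–(B10), the triple iterations collapse: ¬¬¬x = ¬x and ∼̇∼̇∼̇x = ∼̇x for all x. -/
import Mathlib


theorem stmt {A : Type*} [DistribLattice A] [BoundedOrder A]
    (n s : A → A)
    (B1 : ∀ x : A, x ⊓ n x = ⊥)
    (B2 : ∀ x : A, x ⊔ s x = ⊤)
    (B3 : ∀ x : A, n x ⊓ s (n x) = ⊥)
    (B4 : ∀ x : A, s x ⊔ n (s x) = ⊤)
    (B5 : ∀ x y : A, s (x ⊓ y) = s x ⊔ s y)
    (B6 : ∀ x y : A, n (x ⊔ y) = n x ⊓ n y)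
    (B7 : ∀ x y : A, n (x ⊓ n y) = n x ⊔ n (n y))
    (B8 : ∀ x y : A, s (x ⊔ s y) = s x ⊓ s (s y))
    (B9 : ∀ x y : A, (x ⊔ y) ⊓ s (x ⊔ y) ≤ x ⊔ n x)
    (B10 : ∀ x y : A, x ⊓ s x ⊓ y ⊓ s y ≤ s (x ⊔ y)) :
    ∀ x : A, n (n (n x)) = n x ∧ s (s (s x)) = s x := by
  -- key constant identities
  have key1 : ∀ x : A, n x ⊔ n (n x) = n ⊥ := by
    intro x
    have h := B7 x x
    rw [B1 x] at h
    exact h.symm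
  have key2 : ∀ x : A, s x ⊓ s (s x) = s ⊤ := by
    intro x
    have h := B8 x x
    rw [B2 x] at h
    exact h.symm
  intro x
  constructor
  · -- n part: n x and n (n (n x)) are both complements of n (n x) in [⊥, n ⊥]
    have h1 : n x ⊓ n (n x) = ⊥ := B1 (n x)
    have h2 : n (n x) ⊓ n (n (n x)) = ⊥ := B1 (n (n x))
    have j1 : n x ⊔ n (n x) = n ⊥ := key1 x
    have j2 : n (n x) ⊔ n (n (n x)) = n ⊥ := key1 (n x)
    have e1 : n (n (n x)) = n (n (n x)) ⊓ n x := by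
      have hle : n (n (n x)) ≤ n ⊥ := by
        rw [← j2]; exact le_sup_right
      calc n (n (n x)) = n (n (n x)) ⊓ n ⊥ := (inf_eq_left.mpr hle).symm
        _ = n (n (n x)) ⊓ (n x ⊔ n (n x)) := by rw [j1]
        _ = (n (n (n x)) ⊓ n x) ⊔ (n (n (n x)) ⊓ n (n x)) := inf_sup_left _ _ _
        _ = (n (n (n x)) ⊓ n x) ⊔ ⊥ := by rw [inf_comm (n (n (n x))) (n (n x)), h2]
        _ = n (n (n x)) ⊓ n x := sup_bot_eq _
    have e2 : n x = n x ⊓ n (n (n x)) := by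
      have hle : n x ≤ n ⊥ := by
        rw [← j1]; exact le_sup_left
      calc n x = n x ⊓ n ⊥ := (inf_eq_left.mpr hle).symm
        _ = n x ⊓ (n (n x) ⊔ n (n (n x))) := by rw [j2]
        _ = (n x ⊓ n (n x)) ⊔ (n x ⊓ n (n (n x))) := inf_sup_left _ _ _
        _ = ⊥ ⊔ (n x ⊓ n (n (n x))) := by rw [h1]
        _ = n x ⊓ n (n (n x)) := bot_sup_eq _
    rw [e1, inf_comm]; exact e2.symm
  · -- s part: dual argument
    have h1 : s x ⊔ s (s x) = ⊤ := B2 (s x)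
    have h2 : s (s x) ⊔ s (s (s x)) = ⊤ := B2 (s (s x))
    have j1 : s x ⊓ s (s x) = s ⊤ := key2 x
    have j2 : s (s x) ⊓ s (s (s x)) = s ⊤ := key2 (s x)
    have e1 : s (s (s x)) = s (s (s x)) ⊔ s x := by
      have hle : s ⊤ ≤ s (s (s x)) := by
        rw [← j2]; exact inf_le_right
      calc s (s (s x)) = s (s (s x)) ⊔ s ⊤ := (sup_eq_left.mpr hle).symm
        _ = s (s (s x)) ⊔ (s x ⊓ s (s x)) := by rw [j1]
        _ = (s (s (s x)) ⊔ s x) ⊓ (s (s (s x)) ⊔ s (s x)) := sup_inf_left _ _ _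
        _ = (s (s (s x)) ⊔ s x) ⊓ ⊤ := by rw [sup_comm (s (s (s x))) (s (s x)), h2]
        _ = s (s (s x)) ⊔ s x := inf_top_eq _
    have e2 : s x = s x ⊔ s (s (s x)) := by
      have hle : s ⊤ ≤ s x := by
        rw [← j1]; exact inf_le_left
      calc s x = s x ⊔ s ⊤ := (sup_eq_left.mpr hle).symm
        _ = s x ⊔ (s (s x) ⊓ s (s (s x))) := by rw [j2]
        _ = (s x ⊔ s (s x)) ⊓ (s x ⊔ s (s (s x))) := sup_inf_left _ _ _
        _ = ⊤ ⊓ (s x ⊔ s (s (s x))) := by rw [h1]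
        _ = s x ⊔ s (s (s x)) := top_inf_eq _
    rw [e1, sup_comm]; exact e2.symm
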